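/- Let A be a Fréchet–Arens–Michael algebra. The following conditions are equivalent: (1) for every Banach A-bimodule X, every continuous derivation from A into the dual X* is inner; (2) for every complex Banach algebra B such that there exists a continuous algebra homomorphism φ : A → B with dense range, and for every Banach B-bimodule X, every continuous derivation from B into X* is inner (i.e., every such Banach algebra B is amenable in Johnson's sense). -/

import Mathlib

open Filter Topology Bornology Set Pointwise

universe u

/-- A (topological) `C`-bimodule structure on a topological vector space `X`:
jointly continuous left and right `C`-module actions compatible with the
`ℂ`-vector space structures and satisfying `(a·x)·b = a·(x·b)`. -/
structure BimoduleStructure (C : Type u) (X : Type u) [NonUnitalRing C] [Module ℂ C]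
    [TopologicalSpace C] [AddCommGroup X] [Module ℂ X] [TopologicalSpace X] where
  l : C → X → X
  r : X → C → X
  l_add_left : ∀ (a b : C) (x : X), l (a + b) x = l a x + l b x
  l_add_right : ∀ (a : C) (x y : X), l a (x + y) = l a x + l a y
  l_smul_left : ∀ (c : ℂ) (a : C) (x : X), l (c • a) x = c • l a x
  l_smul_right : ∀ (c : ℂ) (a : C) (x : X), l a (c • x) = c • l a x
  l_mul : ∀ (a b : C) (x : X), l (a * b) x = l a (l b x)
  r_add_left : ∀ (x y : X) (a : C), r (x + y) a = r x a + r y a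
  r_add_right : ∀ (x : X) (a b : C), r x (a + b) = r x a + r x b
  r_smul_left : ∀ (c : ℂ) (x : X) (a : C), r (c • x) a = c • r x a
  r_smul_right : ∀ (c : ℂ) (x : X) (a : C), r x (c • a) = c • r x a
  r_mul : ∀ (x : X) (a b : C), r x (a * b) = r (r x a) b
  middle_assoc : ∀ (a : C) (x : X) (b : C), r (l a x) b = l a (r x b)
  cont_l : Continuous fun z : C × X => l z.1 z.2
  cont_r : Continuous fun z : X × C => r z.1 z.2

/-- `C` is "Banach-dual amenable": for every Banach `C`-bimodule `X`, every continuous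
derivation from `C` into the dual bimodule `X*` is inner. -/
def AllBanachDualDerivationsInner (C : Type u) [NonUnitalRing C] [Module ℂ C]
    [TopologicalSpace C] : Prop :=
  ∀ (X : Type u) (_ : NormedAddCommGroup X) (_ : NormedSpace ℂ X)
    (M : BimoduleStructure C X) (D : C →ₗ[ℂ] (X →L[ℂ] ℂ)),
    Continuous (fun a : C => D a) →
    (∀ (a b : C) (x : X), D (a * b) x = D b (M.r x a) + D a (M.l b x)) →
    ∃ f : X →L[ℂ] ℂ, ∀ (a : C) (x : X), D a x = f (M.r x a) - f (M.l a x)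

/-- Wrapper used to equip `A` with the topology of a single submultiplicative seminorm. -/
structure AqSyn (A : Type u) : Type u where
  /-- the underlying element -/
  val : A

namespace AqSyn

variable {A : Type u}

theorem val_injective : Function.Injective (val : AqSyn A → A) := fun a b h => by
  cases a; cases b; cases h; rfl

section ops

variable [NonUnitalRing A] [Module ℂ A]

instance : Zero (AqSyn A) := ⟨⟨0⟩⟩
instance : Add (AqSyn A) := ⟨fun x y => ⟨x.val + y.val⟩⟩
instance : Mul (AqSyn A) := ⟨fun x y => ⟨x.val * y.val⟩⟩
instance : Neg (AqSyn A) := ⟨fun x => ⟨-x.val⟩⟩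
instance : Sub (AqSyn A) := ⟨fun x y => ⟨x.val - y.val⟩⟩
instance : SMul ℕ (AqSyn A) := ⟨fun n x => ⟨n • x.val⟩⟩
instance : SMul ℤ (AqSyn A) := ⟨fun n x => ⟨n • x.val⟩⟩
instance : SMul ℂ (AqSyn A) := ⟨fun c x => ⟨c • x.val⟩⟩

instance : NonUnitalRing (AqSyn A) :=
  val_injective.nonUnitalRing val rfl (fun _ _ => rfl) (fun _ _ => rfl) (fun _ => rfl)
    (fun _ _ => rfl) (fun _ _ => rfl) (fun _ _ => rfl)

/-- `val` as an additive monoid homomorphism. -/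
def valHom : AqSyn A →+ A :=
  { toFun := val, map_zero' := rfl, map_add' := fun _ _ => rfl }

instance : Module ℂ (AqSyn A) :=
  Function.Injective.module ℂ valHom val_injective (fun _ _ => rfl)

end ops

end AqSyn

/-- A jointly continuous bilinear-type map from a `WithSeminorms` space times a normed
space into a normed space is controlled by finitely many seminorms. -/
theorem seminorm_bound_of_bilinear {A : Type u} {X : Type u} [AddCommGroup A] [Module ℂ A]
    [TopologicalSpace A] [NormedAddCommGroup X] [NormedSpace ℂ X]
    (p : SeminormFamily ℂ A ℕ) (hp : WithSeminorms p)
    (g : A → X → X)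
    (hsl : ∀ (c : ℂ) (a : A) (x : X), g (c • a) x = c • g a x)
    (hsr : ∀ (c : ℂ) (a : A) (x : X), g a (c • x) = c • g a x)
    (hcont : Continuous fun z : A × X => g z.1 z.2) :
    ∃ (s : Finset ℕ) (C : ℝ), 0 < C ∧ ∀ (a : A) (x : X), ‖g a x‖ ≤ C * (s.sup p) a * ‖x‖ := by
  have g0 : ∀ x : X, g 0 x = 0 := by
    intro x
    have h := hsl 0 0 x
    simpa using h
  have gx0 : ∀ a : A, g a 0 = 0 := by
    intro a
    have h := hsr 0 a 0
    simpa using h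
  have h00 : ContinuousAt (fun z : A × X => g z.1 z.2) ((0 : A), (0 : X)) :=
    hcont.continuousAt
  have hmem : (fun z : A × X => g z.1 z.2) ⁻¹' {y : X | ‖y‖ < 1} ∈ 𝓝 ((0 : A), (0 : X)) := by
    apply h00
    show {y : X | ‖y‖ < 1} ∈ 𝓝 (g 0 0)
    rw [g0 0]
    have : {y : X | ‖y‖ < 1} = Metric.ball (0 : X) 1 := by
      ext y; simp [Metric.mem_ball, dist_zero_right]
    rw [this]
    exact Metric.ball_mem_nhds _ one_pos
  rw [nhds_prod_eq] at hmem
  rcases Filter.mem_prod_iff.mp hmem with ⟨U, hUm, V, hVm, hUV⟩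
  rcases hp.hasBasis_zero_ball.mem_iff.mp hUm with ⟨⟨s, r⟩, hr, hball⟩
  simp only at hr hball
  rcases Metric.mem_nhds_iff.mp hVm with ⟨δ, hδ, hballV⟩
  refine ⟨s, 2 / (r * δ), by positivity, fun a x => ?_⟩
  set q : Seminorm ℂ A := s.sup p with hq
  by_cases hx : x = 0
  · rw [hx, gx0]
    simp
  · have hxn : 0 < ‖x‖ := norm_pos_iff.mpr hx
    have hxne : ‖x‖ ≠ 0 := ne_of_gt hxn
    have hrne : r ≠ 0 := ne_of_gt hr
    have hδne : δ ≠ 0 := ne_of_gt hδ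
    have key : ∀ t : ℝ, q a < t → ‖g a x‖ ≤ 2 / (r * δ) * t * ‖x‖ := by
      intro t ht
      have ht0 : 0 < t := lt_of_le_of_lt (apply_nonneg q a) ht
      have htne : t ≠ 0 := ne_of_gt ht0
      have ha' : (((r / t : ℝ) : ℂ) • a) ∈ U := by
        apply hball
        rw [Seminorm.mem_ball_zero]
        rw [map_smul_eq_mul]
        have hnorm : ‖((r / t : ℝ) : ℂ)‖ = r / t := by
          rw [Complex.norm_real, Real.norm_eq_abs, abs_of_pos (by positivity)]
        rw [hnorm]
        calc r / t * q a < r / t * t := by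
              exact mul_lt_mul_of_pos_left ht (by positivity)
          _ = r := by field_simp
      have hx' : (((δ / (2 * ‖x‖) : ℝ) : ℂ) • x) ∈ V := by
        apply hballV
        rw [Metric.mem_ball, dist_zero_right, norm_smul]
        have hnorm : ‖((δ / (2 * ‖x‖) : ℝ) : ℂ)‖ = δ / (2 * ‖x‖) := by
          rw [Complex.norm_real, Real.norm_eq_abs, abs_of_pos (by positivity)]
        rw [hnorm]
        have : δ / (2 * ‖x‖) * ‖x‖ = δ / 2 := by field_simp
        rw [this]
        linarith
      have hlt : ‖g (((r / t : ℝ) : ℂ) • a) (((δ / (2 * ‖x‖) : ℝ) : ℂ) • x)‖ < 1 := by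
        have hmemUV : ((((r / t : ℝ) : ℂ) • a), (((δ / (2 * ‖x‖) : ℝ) : ℂ) • x)) ∈ U ×ˢ V :=
          ⟨ha', hx'⟩
        exact hUV hmemUV
      rw [hsl, hsr, norm_smul, norm_smul] at hlt
      have hn1 : ‖((r / t : ℝ) : ℂ)‖ = r / t := by
        rw [Complex.norm_real, Real.norm_eq_abs, abs_of_pos (by positivity)]
      have hn2 : ‖((δ / (2 * ‖x‖) : ℝ) : ℂ)‖ = δ / (2 * ‖x‖) := by
        rw [Complex.norm_real, Real.norm_eq_abs, abs_of_pos (by positivity)]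
      rw [hn1, hn2] at hlt
      -- hlt : r / t * (δ / (2 * ‖x‖) * ‖g a x‖) < 1
      have hkey : ‖g a x‖ * (r * δ) < 2 * t * ‖x‖ := by
        calc ‖g a x‖ * (r * δ)
            = (r / t * (δ / (2 * ‖x‖) * ‖g a x‖)) * (2 * t * ‖x‖) := by
              field_simp
          _ < 1 * (2 * t * ‖x‖) := by
              exact mul_lt_mul_of_pos_right hlt (by positivity)
          _ = 2 * t * ‖x‖ := one_mul _
      have h2 : ‖g a x‖ ≤ 2 * t * ‖x‖ / (r * δ) := by
        rw [le_div_iff₀ (by positivity)]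
        exact le_of_lt hkey
      have heq : 2 / (r * δ) * t * ‖x‖ = 2 * t * ‖x‖ / (r * δ) := by ring
      rw [heq]
      exact h2
    have hpos : (0 : ℝ) < 2 / (r * δ) * ‖x‖ := by positivity
    have hdiv : ‖g a x‖ / (2 / (r * δ) * ‖x‖) ≤ q a := by
      refine le_of_forall_gt_imp_ge_of_dense fun t ht => ?_
      rw [div_le_iff₀ hpos]
      calc ‖g a x‖ ≤ 2 / (r * δ) * t * ‖x‖ := key t ht
        _ = t * (2 / (r * δ) * ‖x‖) := by ring
    calc ‖g a x‖ = ‖g a x‖ / (2 / (r * δ) * ‖x‖) * (2 / (r * δ) * ‖x‖) := by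
          field_simp
      _ ≤ q a * (2 / (r * δ) * ‖x‖) := mul_le_mul_of_nonneg_right hdiv hpos.le
      _ = 2 / (r * δ) * q a * ‖x‖ := by ring

/-- For a Fréchet–Arens–Michael algebra `A`, every continuous derivation
of `A` into the dual of a Banach `A`-bimodule is inner iff every Banach algebra `B`
admitting a continuous homomorphism `A → B` with dense range is amenable in Johnson's
sense. -/
theorem stmt_10 {A : Type u} [NonUnitalRing A] [Module ℂ A] [UniformSpace A]
    [IsUniformAddGroup A] [ContinuousSMul ℂ A] [CompleteSpace A] [T2Space A]
    (p : SeminormFamily ℂ A ℕ) (hp : WithSeminorms p)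
    (hsub : ∀ (n : ℕ) (a b : A), p n (a * b) ≤ p n a * p n b) :
    AllBanachDualDerivationsInner A ↔
    (∀ (B : Type u) (_ : NonUnitalNormedRing B) (_ : NormedSpace ℂ B)
      (φ : A →ₙₐ[ℂ] B), Continuous φ → DenseRange φ →
      AllBanachDualDerivationsInner B) := by
  constructor
  · -- (1) ⇒ (2)
    intro h1 B iB iB2 φ hφc hφd
    intro X iX iX2 M D hDc hder
    -- pull back the bimodule structure along φ
    let M' : BimoduleStructure A X :=
      { l := fun a x => M.l (φ a) x
        r := fun x a => M.r x (φ a)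
        l_add_left := fun a b x => by
          show M.l (φ (a + b)) x = M.l (φ a) x + M.l (φ b) x
          rw [map_add]; exact M.l_add_left _ _ x
        l_add_right := fun a x y => M.l_add_right _ x y
        l_smul_left := fun c a x => by
          show M.l (φ (c • a)) x = c • M.l (φ a) x
          rw [map_smul]; exact M.l_smul_left c _ x
        l_smul_right := fun c a x => M.l_smul_right c _ x
        l_mul := fun a b x => by
          show M.l (φ (a * b)) x = M.l (φ a) (M.l (φ b) x)
          rw [map_mul]; exact M.l_mul _ _ x
        r_add_left := fun x y a => M.r_add_left x y _
        r_add_right := fun x a b => by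
          show M.r x (φ (a + b)) = M.r x (φ a) + M.r x (φ b)
          rw [map_add]; exact M.r_add_right x _ _
        r_smul_left := fun c x a => M.r_smul_left c x _
        r_smul_right := fun c x a => by
          show M.r x (φ (c • a)) = c • M.r x (φ a)
          rw [map_smul]; exact M.r_smul_right c x _
        r_mul := fun x a b => by
          show M.r x (φ (a * b)) = M.r (M.r x (φ a)) (φ b)
          rw [map_mul]; exact M.r_mul x _ _
        middle_assoc := fun a x b => M.middle_assoc _ x _
        cont_l := M.cont_l.comp ((hφc.comp continuous_fst).prodMk continuous_snd)
        cont_r := M.cont_r.comp (continuous_fst.prodMk (hφc.comp continuous_snd)) }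
    let D' : A →ₗ[ℂ] (X →L[ℂ] ℂ) :=
      { toFun := fun a => D (φ a)
        map_add' := fun a b => by
          show D (φ (a + b)) = D (φ a) + D (φ b)
          rw [map_add, map_add]
        map_smul' := fun c a => by
          show D (φ (c • a)) = c • D (φ a)
          rw [map_smul, map_smul] }
    have hD'c : Continuous fun a : A => D' a := hDc.comp hφc
    have hder' : ∀ (a b : A) (x : X), D' (a * b) x = D' b (M'.r x a) + D' a (M'.l b x) := by
      intro a b x
      show D (φ (a * b)) x = D (φ b) (M.r x (φ a)) + D (φ a) (M.l (φ b) x)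
      rw [map_mul]
      exact hder (φ a) (φ b) x
    obtain ⟨f, hf⟩ := h1 X iX iX2 M' D' hD'c hder'
    refine ⟨f, fun b x => ?_⟩
    -- the identity holds on the dense range of φ and both sides are continuous in b
    have hclosed : IsClosed {b : B | ∀ x : X, D b x = f (M.r x b) - f (M.l b x)} := by
      have heq : {b : B | ∀ x : X, D b x = f (M.r x b) - f (M.l b x)} =
          ⋂ x : X, {b : B | D b x = f (M.r x b) - f (M.l b x)} := by
        ext b; simp [Set.mem_iInter]
      rw [heq]
      refine isClosed_iInter fun x => isClosed_eq ?_ ?_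
      · exact (ContinuousLinearMap.apply ℂ ℂ x).continuous.comp hDc
      · refine Continuous.sub ?_ ?_
        · exact f.continuous.comp (M.cont_r.comp (continuous_const.prodMk continuous_id))
        · exact f.continuous.comp (M.cont_l.comp (continuous_id.prodMk continuous_const))
    have hrange : Set.range φ ⊆ {b : B | ∀ x : X, D b x = f (M.r x b) - f (M.l b x)} := by
      rintro - ⟨a, rfl⟩ x
      exact hf a x
    have hb : b ∈ {b : B | ∀ x : X, D b x = f (M.r x b) - f (M.l b x)} :=
      hclosed.closure_subset_iff.mpr hrange (hφd b)
    exact hb x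
  · -- (2) ⇒ (1)
    intro H
    intro X iX iX2 M D hDc hder
    -- bounds for the left action, the right action and the derivation
    obtain ⟨s₁, C₁, hC₁, hbl⟩ :=
      seminorm_bound_of_bilinear p hp M.l M.l_smul_left M.l_smul_right M.cont_l
    obtain ⟨s₂, C₂, hC₂, hbr⟩ :=
      seminorm_bound_of_bilinear p hp (fun a x => M.r x a)
        (fun c a x => M.r_smul_right c x a) (fun c a x => M.r_smul_left c x a)
        (M.cont_r.comp continuous_swap)
    obtain ⟨s₃, C₃, hC₃, hDle⟩ :=
      Seminorm.bound_of_continuous hp ((normSeminorm ℂ (X →L[ℂ] ℂ)).comp D)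
        (continuous_norm.comp hDc)
    have hD3 : ∀ a : A, ‖D a‖ ≤ (C₃ : ℝ) * (s₃.sup p) a := by
      intro a
      have h := Seminorm.le_def.mp hDle a
      simpa [Seminorm.comp_apply, Seminorm.smul_apply, NNReal.smul_def] using h
    -- combine everything into one submultiplicative seminorm
    set s : Finset ℕ := (s₁ ∪ s₂) ∪ s₃ with hs
    set q0 : Seminorm ℂ A := s.sup p with hq0
    have hmono : ∀ (t : Finset ℕ), t ⊆ s → ∀ a : A, (t.sup p) a ≤ q0 a := by
      intro t ht a
      exact Seminorm.le_def.mp (Finset.sup_mono ht) a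
    have hsub1 : s₁ ⊆ s := Finset.Subset.trans Finset.subset_union_left Finset.subset_union_left
    have hsub2 : s₂ ⊆ s := Finset.Subset.trans Finset.subset_union_right Finset.subset_union_left
    have hsub3 : s₃ ⊆ s := Finset.subset_union_right
    have hbl' : ∀ (a : A) (x : X), ‖M.l a x‖ ≤ C₁ * q0 a * ‖x‖ := by
      intro a x
      refine (hbl a x).trans ?_
      exact mul_le_mul_of_nonneg_right
        (mul_le_mul_of_nonneg_left (hmono s₁ hsub1 a) hC₁.le) (norm_nonneg x)
    have hbr' : ∀ (a : A) (x : X), ‖M.r x a‖ ≤ C₂ * q0 a * ‖x‖ := by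
      intro a x
      refine (hbr a x).trans ?_
      exact mul_le_mul_of_nonneg_right
        (mul_le_mul_of_nonneg_left (hmono s₂ hsub2 a) hC₂.le) (norm_nonneg x)
    have hD3' : ∀ a : A, ‖D a‖ ≤ (C₃ : ℝ) * q0 a := by
      intro a
      refine (hD3 a).trans ?_
      exact mul_le_mul_of_nonneg_left (hmono s₃ hsub3 a) C₃.coe_nonneg
    have hq0mul : ∀ a b : A, q0 (a * b) ≤ q0 a * q0 b := by
      intro a b
      refine Seminorm.finset_sup_apply_le
        (mul_nonneg (apply_nonneg q0 a) (apply_nonneg q0 b)) fun i hi => ?_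
      refine (hsub i a b).trans ?_
      exact mul_le_mul (Seminorm.le_finset_sup_apply hi) (Seminorm.le_finset_sup_apply hi)
        (apply_nonneg _ _) (apply_nonneg _ _)
    -- the Banach algebra `B`
    letI iA3 : SeminormedAddCommGroup (AqSyn A) :=
      AddGroupSeminorm.toSeminormedAddCommGroup
        { toFun := fun a => q0 a.val
          map_zero' := map_zero q0
          add_le' := fun x y => map_add_le_add q0 x.val y.val
          neg' := fun x => map_neg_eq_map q0 x.val }
    letI iA4 : NonUnitalSeminormedRing (AqSyn A) :=
      { iA3, (inferInstance : NonUnitalRing (AqSyn A)) with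
        norm_mul_le := fun a b => hq0mul a.val b.val }
    letI iA5 : NormedSpace ℂ (AqSyn A) :=
      ⟨fun c a => le_of_eq (map_smul_eq_mul q0 c a.val)⟩
    -- the homomorphism with dense range
    let φ : A →ₙₐ[ℂ] SeparationQuotient (AqSyn A) :=
      { toFun := fun a => SeparationQuotient.mk (⟨a⟩ : AqSyn A)
        map_add' := fun a b => rfl
        map_zero' := rfl
        map_smul' := fun c a => rfl
        map_mul' := fun a b => rfl }
    have hid : Continuous (fun a : A => (⟨a⟩ : AqSyn A)) := by
      rw [continuous_iff_continuousAt]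
      intro a
      refine Metric.tendsto_nhds.mpr fun ε hε => ?_
      have hball : (q0.ball a ε) ∈ 𝓝 a := hp.hasBasis_ball.mem_of_mem (i := (s, ε)) hε
      filter_upwards [hball] with b hb
      show q0 (-b + a) < ε
      rw [neg_add_eq_sub, map_sub_rev]
      exact (Seminorm.mem_ball q0).mp hb
    have hφc : Continuous φ := SeparationQuotient.continuous_mk.comp hid
    have hφsurj : Function.Surjective φ := fun b => by
      obtain ⟨a, ha⟩ := SeparationQuotient.surjective_mk b
      exact ⟨a.val, ha⟩
    have hφd : DenseRange φ := hφsurj.denseRange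
    -- inseparability facts
    have hinsep : ∀ a a' : AqSyn A, Inseparable a a' → q0 (a.val - a'.val) = 0 := by
      intro a a' h
      have h' : q0 (-a.val + a'.val) = 0 := Metric.inseparable_iff.mp h
      rwa [neg_add_eq_sub, map_sub_rev] at h'
    have hl0 : ∀ (x : X) (a a' : AqSyn A), Inseparable a a' → M.l a.val x = M.l a'.val x := by
      intro x a a' h
      have h0 := hinsep a a' h
      have hneg : M.l (-a'.val) x = -M.l a'.val x := by
        have h := M.l_smul_left (-1 : ℂ) a'.val x
        simpa [neg_smul, one_smul] using h
      have hdiff : M.l (a.val - a'.val) x = M.l a.val x - M.l a'.val x := by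
        rw [sub_eq_add_neg, M.l_add_left, hneg, ← sub_eq_add_neg]
      have hz : M.l (a.val - a'.val) x = 0 := by
        refine norm_le_zero_iff.mp ?_
        have := hbl' (a.val - a'.val) x
        rw [h0] at this
        simpa using this
      have h2 : M.l a.val x - M.l a'.val x = 0 := by rw [← hdiff]; exact hz
      exact sub_eq_zero.mp h2
    have hr0 : ∀ (x : X) (a a' : AqSyn A), Inseparable a a' → M.r x a.val = M.r x a'.val := by
      intro x a a' h
      have h0 := hinsep a a' h
      have hneg : M.r x (-a'.val) = -M.r x a'.val := by
        have h := M.r_smul_right (-1 : ℂ) x a'.val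
        simpa [neg_smul, one_smul] using h
      have hdiff : M.r x (a.val - a'.val) = M.r x a.val - M.r x a'.val := by
        rw [sub_eq_add_neg, M.r_add_right, hneg, ← sub_eq_add_neg]
      have hz : M.r x (a.val - a'.val) = 0 := by
        refine norm_le_zero_iff.mp ?_
        have := hbr' (a.val - a'.val) x
        rw [h0] at this
        simpa using this
      have h2 : M.r x a.val - M.r x a'.val = 0 := by rw [← hdiff]; exact hz
      exact sub_eq_zero.mp h2
    have hD0 : ∀ a a' : AqSyn A, Inseparable a a' → D a.val = D a'.val := by
      intro a a' h
      have h0 := hinsep a a' h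
      have hz : D (a.val - a'.val) = 0 := by
        refine norm_le_zero_iff.mp ?_
        have := hD3' (a.val - a'.val)
        rw [h0] at this
        simpa using this
      have h2 : D a.val - D a'.val = 0 := by rw [← map_sub]; exact hz
      exact sub_eq_zero.mp h2
    -- the bimodule structure over `B`
    let Ml : SeparationQuotient (AqSyn A) → X → X := fun b x =>
      SeparationQuotient.lift (fun a : AqSyn A => M.l a.val x) (hl0 x) b
    let Mr : X → SeparationQuotient (AqSyn A) → X := fun x b =>
      SeparationQuotient.lift (fun a : AqSyn A => M.r x a.val) (hr0 x) b
    have hcontMl : Continuous fun z : SeparationQuotient (AqSyn A) × X => Ml z.1 z.2 := by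
      have hB : IsBoundedBilinearMap ℂ
          (fun z : SeparationQuotient (AqSyn A) × X => Ml z.1 z.2) :=
        { add_left := fun b1 b2 x => by
            obtain ⟨a1, rfl⟩ := SeparationQuotient.surjective_mk b1
            obtain ⟨a2, rfl⟩ := SeparationQuotient.surjective_mk b2
            exact M.l_add_left a1.val a2.val x
          smul_left := fun c b x => by
            obtain ⟨a, rfl⟩ := SeparationQuotient.surjective_mk b
            exact M.l_smul_left c a.val x
          add_right := fun b x1 x2 => by
            obtain ⟨a, rfl⟩ := SeparationQuotient.surjective_mk b
            exact M.l_add_right a.val x1 x2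
          smul_right := fun c b x => by
            obtain ⟨a, rfl⟩ := SeparationQuotient.surjective_mk b
            exact M.l_smul_right c a.val x
          bound := ⟨C₁ + 1, by linarith, fun b x => by
            obtain ⟨a, rfl⟩ := SeparationQuotient.surjective_mk b
            show ‖M.l a.val x‖ ≤ (C₁ + 1) * q0 a.val * ‖x‖
            refine (hbl' a.val x).trans ?_
            exact mul_le_mul_of_nonneg_right
              (mul_le_mul_of_nonneg_right (by linarith) (apply_nonneg q0 a.val))
              (norm_nonneg x)⟩ }
      exact hB.continuous
    have hcontMr : Continuous fun z : X × SeparationQuotient (AqSyn A) => Mr z.1 z.2 := by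
      have hB : IsBoundedBilinearMap ℂ
          (fun z : X × SeparationQuotient (AqSyn A) => Mr z.1 z.2) :=
        { add_left := fun x1 x2 b => by
            obtain ⟨a, rfl⟩ := SeparationQuotient.surjective_mk b
            exact M.r_add_left x1 x2 a.val
          smul_left := fun c x b => by
            obtain ⟨a, rfl⟩ := SeparationQuotient.surjective_mk b
            exact M.r_smul_left c x a.val
          add_right := fun x b1 b2 => by
            obtain ⟨a1, rfl⟩ := SeparationQuotient.surjective_mk b1
            obtain ⟨a2, rfl⟩ := SeparationQuotient.surjective_mk b2
            exact M.r_add_right x a1.val a2.val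
          smul_right := fun c x b => by
            obtain ⟨a, rfl⟩ := SeparationQuotient.surjective_mk b
            exact M.r_smul_right c x a.val
          bound := ⟨C₂ + 1, by linarith, fun x b => by
            obtain ⟨a, rfl⟩ := SeparationQuotient.surjective_mk b
            show ‖M.r x a.val‖ ≤ (C₂ + 1) * ‖x‖ * q0 a.val
            calc ‖M.r x a.val‖ ≤ C₂ * q0 a.val * ‖x‖ := hbr' a.val x
              _ ≤ (C₂ + 1) * (q0 a.val * ‖x‖) := by
                  rw [mul_assoc]
                  exact mul_le_mul_of_nonneg_right (by linarith)
                    (mul_nonneg (apply_nonneg _ _) (norm_nonneg _))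
              _ = (C₂ + 1) * ‖x‖ * q0 a.val := by ring⟩ }
      exact hB.continuous
    let M' : BimoduleStructure (SeparationQuotient (AqSyn A)) X :=
      { l := Ml
        r := Mr
        l_add_left := fun b1 b2 x => by
          obtain ⟨a1, rfl⟩ := SeparationQuotient.surjective_mk b1
          obtain ⟨a2, rfl⟩ := SeparationQuotient.surjective_mk b2
          exact M.l_add_left a1.val a2.val x
        l_add_right := fun b x y => by
          obtain ⟨a, rfl⟩ := SeparationQuotient.surjective_mk b
          exact M.l_add_right a.val x y
        l_smul_left := fun c b x => by
          obtain ⟨a, rfl⟩ := SeparationQuotient.surjective_mk b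
          exact M.l_smul_left c a.val x
        l_smul_right := fun c b x => by
          obtain ⟨a, rfl⟩ := SeparationQuotient.surjective_mk b
          exact M.l_smul_right c a.val x
        l_mul := fun b1 b2 x => by
          obtain ⟨a1, rfl⟩ := SeparationQuotient.surjective_mk b1
          obtain ⟨a2, rfl⟩ := SeparationQuotient.surjective_mk b2
          exact M.l_mul a1.val a2.val x
        r_add_left := fun x y b => by
          obtain ⟨a, rfl⟩ := SeparationQuotient.surjective_mk b
          exact M.r_add_left x y a.val
        r_add_right := fun x b1 b2 => by
          obtain ⟨a1, rfl⟩ := SeparationQuotient.surjective_mk b1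
          obtain ⟨a2, rfl⟩ := SeparationQuotient.surjective_mk b2
          exact M.r_add_right x a1.val a2.val
        r_smul_left := fun c x b => by
          obtain ⟨a, rfl⟩ := SeparationQuotient.surjective_mk b
          exact M.r_smul_left c x a.val
        r_smul_right := fun c x b => by
          obtain ⟨a, rfl⟩ := SeparationQuotient.surjective_mk b
          exact M.r_smul_right c x a.val
        r_mul := fun x b1 b2 => by
          obtain ⟨a1, rfl⟩ := SeparationQuotient.surjective_mk b1
          obtain ⟨a2, rfl⟩ := SeparationQuotient.surjective_mk b2
          exact M.r_mul x a1.val a2.val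
        middle_assoc := fun b1 x b2 => by
          obtain ⟨a1, rfl⟩ := SeparationQuotient.surjective_mk b1
          obtain ⟨a2, rfl⟩ := SeparationQuotient.surjective_mk b2
          exact M.middle_assoc a1.val x a2.val
        cont_l := hcontMl
        cont_r := hcontMr }
    -- the derivation over `B`
    let D' : SeparationQuotient (AqSyn A) →ₗ[ℂ] (X →L[ℂ] ℂ) :=
      { toFun := SeparationQuotient.lift (fun a : AqSyn A => D a.val) hD0
        map_add' := fun b1 b2 => by
          obtain ⟨a1, rfl⟩ := SeparationQuotient.surjective_mk b1
          obtain ⟨a2, rfl⟩ := SeparationQuotient.surjective_mk b2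
          exact map_add D a1.val a2.val
        map_smul' := fun c b => by
          obtain ⟨a, rfl⟩ := SeparationQuotient.surjective_mk b
          exact map_smul D c a.val }
    have hD'c : Continuous fun b : SeparationQuotient (AqSyn A) => D' b := by
      refine AddMonoidHomClass.continuous_of_bound D' (C₃ : ℝ) fun b => ?_
      obtain ⟨a, rfl⟩ := SeparationQuotient.surjective_mk b
      show ‖D a.val‖ ≤ (C₃ : ℝ) * q0 a.val
      exact hD3' a.val
    have hder' : ∀ (b1 b2 : SeparationQuotient (AqSyn A)) (x : X),
        D' (b1 * b2) x = D' b2 (M'.r x b1) + D' b1 (M'.l b2 x) := by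
      intro b1 b2 x
      obtain ⟨a1, rfl⟩ := SeparationQuotient.surjective_mk b1
      obtain ⟨a2, rfl⟩ := SeparationQuotient.surjective_mk b2
      exact hder a1.val a2.val x
    obtain ⟨f, hf⟩ := H (SeparationQuotient (AqSyn A)) inferInstance inferInstance φ hφc hφd
      X iX iX2 M' D' hD'c hder'
    refine ⟨f, fun a x => ?_⟩
    exact hf (SeparationQuotient.mk ⟨a⟩) x
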